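/- Let S ⊆ V be a seed set, let θ* be any distribution attaining the minimum of E_θ[R(c̃, S)] over θ ∈ Θ, and let i ∈ V \ S be a node with max_{γ ∈ Γ(S, i)} L(γ) > 0. Then for every maximizing path γ ∈ argmax_{γ ∈ Γ(S, i)} L(γ), the θ*-probability of the event that at least two edges of γ are missing from the random scenario is zero; i.e., almost surely at most one arc of γ is missing. -/

import Mathlib

set_option linter.unusedSectionVars false
set_option linter.unusedVariables false
set_option maxHeartbeats 1000000


open scoped BigOperators

namespace CorrIM

variable {V : Type*} [Fintype V] [DecidableEq V]

/-- A node `i` is influenced: `i ∈ S`, or `i` is reachable from some node of `S`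
along the live edges of the scenario `c`. -/
def influenced (c : Finset (V × V)) (S : Finset V) (i : V) : Prop :=
  ∃ s ∈ S, Relation.ReflTransGen (fun a b : V => (a, b) ∈ c) s i

/-- `R c S` : the number of influenced nodes in scenario `c` with seed set `S`. -/
noncomputable def R (c : Finset (V × V)) (S : Finset V) : ℕ :=
  Set.ncard {i : V | influenced c S i}

/-- The Fréchet class `Θ` : probability distributions on scenarios (subsets of `E`)
whose marginals agree with the edge likelihoods `p`. -/
def memTheta (E : Finset (V × V)) (p : V × V → ℝ) (θ : Finset (V × V) → ℝ) : Prop :=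
  (∀ c, 0 ≤ θ c) ∧ (∀ c, θ c ≠ 0 → c ⊆ E) ∧ (∑ c : Finset (V × V), θ c) = 1 ∧
    ∀ e ∈ E, (∑ c : Finset (V × V), if e ∈ c then θ c else 0) = p e

/-- Expected number of influenced nodes under the distribution `θ`. -/
noncomputable def expInf (θ : Finset (V × V) → ℝ) (S : Finset V) : ℝ :=
  ∑ c : Finset (V × V), θ c * (R c S : ℝ)

/-- The correlation robust influence function `f^corr`. -/
noncomputable def fcorr (E : Finset (V × V)) (p : V × V → ℝ) (S : Finset V) : ℝ :=
  sInf {x : ℝ | ∃ θ, memTheta E p θ ∧ x = expInf θ S}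

open Classical in
/-- Probability of the event `A` under the distribution `θ`. -/
noncomputable def prob (θ : Finset (V × V) → ℝ) (A : Finset (V × V) → Prop) : ℝ :=
  ∑ c : Finset (V × V), if A c then θ c else 0

/-- `γ` (a list of nodes `i₀, i₁, …, i_λ`, `λ ≥ 1`) is a directed path from the
seed set `S` to the node `i` using edges of `E`. -/
def IsPathFrom (E : Finset (V × V)) (S : Finset V) (i : V) (γ : List V) : Prop :=
  2 ≤ γ.length ∧ (∃ s ∈ S, γ.head? = some s) ∧ γ.getLast? = some i ∧
    γ.Chain' (fun a b : V => (a, b) ∈ E)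

/-- The list of edges `(i₀,i₁), …, (i_{λ-1}, i_λ)` of a path `γ = [i₀, …, i_λ]`. -/
def pathEdges (γ : List V) : List (V × V) := γ.zip γ.tail

/-- The weight `L(γ) = 1 - ∑_{l=1}^{λ} (1 - p(i_{l-1}, i_l))` of a path. -/
noncomputable def L (p : V × V → ℝ) (γ : List V) : ℝ :=
  1 - ((pathEdges γ).map (fun e => 1 - p e)).sum

/-- `π*_i = max(0, max_{γ ∈ Γ(S,i)} L(γ))`, with value `0` when `Γ(S,i) = ∅`. -/
noncomputable def piStar (E : Finset (V × V)) (p : V × V → ℝ) (S : Finset V) (i : V) : ℝ :=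
  sSup (insert 0 {x : ℝ | ∃ γ : List V, IsPathFrom E S i γ ∧ x = L p γ})

/-- The independent cascade distribution `θ_ic` : each edge of `E` is live
independently with probability `p e`. -/
noncomputable def thetaIC (E : Finset (V × V)) (p : V × V → ℝ) (c : Finset (V × V)) : ℝ :=
  if c ⊆ E then (∏ e ∈ c, p e) * ∏ e ∈ E \ c, (1 - p e) else 0

/-- The independent cascade influence function `f^ic`. -/
noncomputable def fic (E : Finset (V × V)) (p : V × V → ℝ) (S : Finset V) : ℝ :=
  expInf (thetaIC E p) S




lemma pathEdges_cons_cons (a b : V) (l : List V) :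
    pathEdges (a :: b :: l) = (a, b) :: pathEdges (b :: l) := rfl

lemma chain'_iff_pathEdges (r : V → V → Prop) :
    ∀ γ : List V, γ.Chain' r ↔ ∀ e ∈ pathEdges γ, r e.1 e.2
  | [] => by simp [pathEdges, List.Chain']
  | [a] => by simp [pathEdges, List.Chain']
  | a :: b :: l => by
    rw [List.Chain', List.isChain_cons_cons, pathEdges_cons_cons]
    rw [show List.IsChain r (b :: l) ↔ _ from chain'_iff_pathEdges r (b :: l)]
    constructor
    · rintro ⟨h1, h2⟩ e he
      rcases List.mem_cons.1 he with h | h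
      · subst h; exact h1
      · exact h2 e h
    · intro h
      exact ⟨h (a, b) List.mem_cons_self, fun e he => h e (List.mem_cons_of_mem _ he)⟩

lemma pathEdges_append_singleton :
    ∀ (γ : List V) (a j : V), γ.getLast? = some a →
      pathEdges (γ ++ [j]) = pathEdges γ ++ [(a, j)]
  | [], a, j, h => by simp at h
  | [x], a, j, h => by
    simp only [List.getLast?_singleton, Option.some.injEq] at h
    subst h; rfl
  | x :: y :: l, a, j, h => by
    have h' : (y :: l).getLast? = some a := by
      rw [← h]; simp [List.getLast?_cons_cons]
    have := pathEdges_append_singleton (y :: l) a j h'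
    show pathEdges (x :: y :: (l ++ [j])) = _
    rw [pathEdges_cons_cons, pathEdges_cons_cons]
    simp only [List.cons_append] at this ⊢
    rw [this]

lemma rtg_of_chain (r : V → V → Prop) :
    ∀ (γ : List V) (x y : V), γ.head? = some x → γ.getLast? = some y →
      γ.Chain' r → Relation.ReflTransGen r x y
  | [], x, y, hh, _, _ => by simp at hh
  | [a], x, y, hh, hl, _ => by
    simp at hh hl; subst hh; subst hl; exact Relation.ReflTransGen.refl
  | a :: b :: l, x, y, hh, hl, hc => by
    simp only [List.head?_cons, Option.some.injEq] at hh
    subst hh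
    rw [List.Chain', List.isChain_cons_cons] at hc
    have hl' : (b :: l).getLast? = some y := by rw [← hl]; simp [List.getLast?_cons_cons]
    exact Relation.ReflTransGen.head hc.1 (rtg_of_chain r (b :: l) b y rfl hl' hc.2)

open Classical

lemma edges_mem_E {E : Finset (V × V)} {S : Finset V} {j : V} {γ : List V}
    (hγ : IsPathFrom E S j γ) : ∀ e ∈ pathEdges γ, e ∈ E :=
  (chain'_iff_pathEdges _ γ).1 hγ.2.2.2

lemma L_le_one {E : Finset (V × V)} {p : V × V → ℝ} (hp : ∀ e ∈ E, 0 ≤ p e ∧ p e ≤ 1)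
    {S : Finset V} {j : V} {γ : List V} (hγ : IsPathFrom E S j γ) : L p γ ≤ 1 := by
  have : 0 ≤ ((pathEdges γ).map (fun e => 1 - p e)).sum := by
    apply List.sum_nonneg
    intro x hx
    rcases List.mem_map.1 hx with ⟨e, he, rfl⟩
    linarith [(hp e (edges_mem_E hγ e he)).2]
  unfold L; linarith

lemma bddAbove_paths {E : Finset (V × V)} {p : V × V → ℝ} (hp : ∀ e ∈ E, 0 ≤ p e ∧ p e ≤ 1)
    (S : Finset V) (j : V) :
    BddAbove {x : ℝ | ∃ γ : List V, IsPathFrom E S j γ ∧ x = L p γ} := by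
  refine ⟨1, fun x hx => ?_⟩
  rcases hx with ⟨γ, hγ, rfl⟩
  exact L_le_one hp hγ

lemma piStar_nonneg {E : Finset (V × V)} {p : V × V → ℝ} (hp : ∀ e ∈ E, 0 ≤ p e ∧ p e ≤ 1)
    (S : Finset V) (j : V) : 0 ≤ piStar E p S j := by
  apply le_csSup
  · rcases bddAbove_paths hp S j with ⟨b, hb⟩
    exact ⟨max 0 b, by rintro x (rfl | hx); · exact le_max_left _ _
                       · exact le_trans (hb hx) (le_max_right _ _)⟩
  · exact Set.mem_insert _ _

lemma piStar_le_one {E : Finset (V × V)} {p : V × V → ℝ} (hp : ∀ e ∈ E, 0 ≤ p e ∧ p e ≤ 1)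
    (S : Finset V) (j : V) : piStar E p S j ≤ 1 := by
  apply csSup_le ⟨0, Set.mem_insert _ _⟩
  rintro x (rfl | ⟨γ, hγ, rfl⟩)
  · norm_num
  · exact L_le_one hp hγ

lemma le_piStar {E : Finset (V × V)} {p : V × V → ℝ} (hp : ∀ e ∈ E, 0 ≤ p e ∧ p e ≤ 1)
    {S : Finset V} {j : V} {γ : List V} (hγ : IsPathFrom E S j γ) : L p γ ≤ piStar E p S j := by
  apply le_csSup
  · rcases bddAbove_paths hp S j with ⟨b, hb⟩
    exact ⟨max 0 b, by rintro x (rfl | hx); · exact le_max_left _ _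
                       · exact le_trans (hb hx) (le_max_right _ _)⟩
  · exact Set.mem_insert_of_mem _ ⟨γ, hγ, rfl⟩

lemma isPathFrom_extend {E : Finset (V × V)} {S : Finset V} {a j : V} {γ : List V}
    (hγ : IsPathFrom E S a γ) (he : (a, j) ∈ E) :
    IsPathFrom E S j (γ ++ [j]) ∧ L p (γ ++ [j]) = L p γ - (1 - p (a, j)) := by
  obtain ⟨hlen, ⟨s, hs, hh⟩, hl, hc⟩ := hγ
  have hne : γ ≠ [] := by rintro rfl; simp at hlen
  have hpe : pathEdges (γ ++ [j]) = pathEdges γ ++ [(a, j)] :=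
    pathEdges_append_singleton γ a j hl
  constructor
  · refine ⟨?_, ⟨s, hs, ?_⟩, ?_, ?_⟩
    · rw [List.length_append]; simp; omega
    · rwa [List.head?_append_of_ne_nil _ hne]
    · simp
    · rw [chain'_iff_pathEdges, hpe]
      intro e hee
      rcases List.mem_append.1 hee with h | h
      · exact (chain'_iff_pathEdges _ γ).1 hc e h
      · simp at h; subst h; exact he
  · unfold L
    rw [hpe, List.map_append, List.sum_append]
    simp; ring

lemma piStar_step_seed {E : Finset (V × V)} {p : V × V → ℝ} (hp : ∀ e ∈ E, 0 ≤ p e ∧ p e ≤ 1)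
    {S : Finset V} {a j : V} (ha : a ∈ S) (he : (a, j) ∈ E) :
    p (a, j) ≤ piStar E p S j := by
  have hpf : IsPathFrom E S j [a, j] := by
    refine ⟨by norm_num, ⟨a, ha, rfl⟩, rfl, ?_⟩
    rw [chain'_iff_pathEdges]
    intro e hee
    simp [pathEdges] at hee
    subst hee; exact he
  have := le_piStar hp hpf
  have hL : L p [a, j] = p (a, j) := by
    unfold L; simp [pathEdges]
  linarith

lemma piStar_step {E : Finset (V × V)} {p : V × V → ℝ} (hp : ∀ e ∈ E, 0 ≤ p e ∧ p e ≤ 1)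
    {S : Finset V} {a j : V} (he : (a, j) ∈ E) :
    piStar E p S a ≤ piStar E p S j + (1 - p (a, j)) := by
  apply csSup_le ⟨0, Set.mem_insert _ _⟩
  rintro x (rfl | ⟨γ, hγ, rfl⟩)
  · have := piStar_nonneg hp S j
    have := (hp _ he).2
    linarith
  · obtain ⟨hpf, hL⟩ := isPathFrom_extend (p := p) hγ he
    have := le_piStar hp hpf
    linarith

/-- the event that two distinct edges of γ are missing -/
def twoMissing (γ : List V) (c : Finset (V × V)) : Prop :=
  ∃ e₁ ∈ pathEdges γ, ∃ e₂ ∈ pathEdges γ, e₁ ≠ e₂ ∧ e₁ ∉ c ∧ e₂ ∉ c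

lemma prob_eq {θ : Finset (V × V) → ℝ} (A : Finset (V × V) → Prop) [∀ c, Decidable (A c)] :
    prob θ A = ∑ c : Finset (V × V), if A c then θ c else 0 := by
  unfold prob
  exact Finset.sum_congr rfl (fun c _ => by by_cases h : A c <;> simp [h])

lemma prob_nonneg {θ : Finset (V × V) → ℝ} (h0 : ∀ c, 0 ≤ θ c) (A : Finset (V × V) → Prop) :
    0 ≤ prob θ A := by
  apply Finset.sum_nonneg
  intro c _
  by_cases hA : A c <;> simp [prob, hA, h0 c]

lemma prob_mono {θ : Finset (V × V) → ℝ} (h0 : ∀ c, 0 ≤ θ c) {A B : Finset (V × V) → Prop}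
    (h : ∀ c, A c → B c) : prob θ A ≤ prob θ B := by
  apply Finset.sum_le_sum
  intro c _
  by_cases hA : A c
  · simp [hA, h c hA]
  · by_cases hB : B c <;> simp [hA, hB, h0 c]

lemma prob_seed {E : Finset (V × V)} {p : V × V → ℝ} {θ : Finset (V × V) → ℝ}
    (hθ : memTheta E p θ) {S : Finset V} {j : V} (hj : j ∈ S) :
    prob θ (fun c => influenced c S j) = 1 := by
  unfold prob
  rw [← hθ.2.2.1]
  apply Finset.sum_congr rfl
  intro c _
  rw [if_pos ⟨j, hj, Relation.ReflTransGen.refl⟩]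

lemma sum_list_swap {α β : Type*} (l : List α) (s : Finset β) (g : β → α → ℝ) :
    ∑ x ∈ s, (l.map (g x)).sum = (l.map (fun a => ∑ x ∈ s, g x a)).sum := by
  induction l with
  | nil => simp
  | cons a t ih => simp [Finset.sum_add_distrib, ih]

lemma marginal_missing {E : Finset (V × V)} {p : V × V → ℝ} {θ : Finset (V × V) → ℝ}
    (hθ : memTheta E p θ) {e : V × V} (he : e ∈ E) :
    (∑ c : Finset (V × V), if e ∈ c then (0:ℝ) else θ c) = 1 - p e := by
  have h1 := hθ.2.2.1
  have h2 := hθ.2.2.2 e he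
  have : (∑ c : Finset (V × V), if e ∈ c then θ c else 0)
      + (∑ c : Finset (V × V), if e ∈ c then (0:ℝ) else θ c) = 1 := by
    rw [← Finset.sum_add_distrib, ← h1]
    apply Finset.sum_congr rfl
    intro c _
    by_cases hc : e ∈ c <;> simp [hc]
  linarith

lemma lower_bound_path {E : Finset (V × V)} {p : V × V → ℝ}
    (hp : ∀ e ∈ E, 0 ≤ p e ∧ p e ≤ 1) {θ : Finset (V × V) → ℝ}
    (hθ : memTheta E p θ) {S : Finset V} {j : V} {γ : List V}
    (hγ : IsPathFrom E S j γ) :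
    L p γ + prob θ (twoMissing γ) ≤ prob θ (fun c => influenced c S j) := by
  classical
  have h0 := hθ.1
  have htot := hθ.2.2.1
  set l := pathEdges γ with hl
  -- step A: allLive ≤ influenced
  have stepA : prob θ (fun c => ∀ e ∈ l, e ∈ c) ≤ prob θ (fun c => influenced c S j) := by
    apply prob_mono h0
    intro c hc
    obtain ⟨_, ⟨s, hs, hh⟩, hlast, hchain⟩ := hγ
    refine ⟨s, hs, rtg_of_chain _ γ s j hh hlast ?_⟩
    rw [chain'_iff_pathEdges]
    exact fun e he => hc e he
  -- step B
  have hMc : ∀ c : Finset (V × V), θ c * 1 + (if twoMissing γ c then θ c else 0)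
      ≤ (if (∀ e ∈ l, e ∈ c) then θ c else 0)
        + θ c * (l.map (fun e => if e ∈ c then (0:ℝ) else 1)).sum := by
    intro c
    have hMnn : (0:ℝ) ≤ (l.map (fun e => if e ∈ c then (0:ℝ) else 1)).sum := by
      apply List.sum_nonneg
      intro x hx
      rcases List.mem_map.1 hx with ⟨e, _, rfl⟩
      by_cases h : e ∈ c <;> simp [h]
    by_cases hall : ∀ e ∈ l, e ∈ c
    · have hnt : ¬ twoMissing γ c := by
        rintro ⟨e₁, he₁, e₂, he₂, _, hn₁, _⟩
        exact hn₁ (hall e₁ he₁)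
      rw [if_pos hall, if_neg hnt]
      nlinarith [h0 c]
    · rw [if_neg hall]
      push_neg at hall
      obtain ⟨e0, he0, hne0⟩ := hall
      by_cases htwo : twoMissing γ c
      · rw [if_pos htwo]
        obtain ⟨e₁, he₁, e₂, he₂, hne, hn₁, hn₂⟩ := htwo
        obtain ⟨rest, hperm⟩ : ∃ rest, List.Perm l (e₁ :: rest) :=
          ⟨_, List.perm_cons_erase he₁⟩
        have he₂' : e₂ ∈ rest := by
          rcases List.mem_cons.1 (hperm.mem_iff.mp he₂) with h | h
          · exact absurd h hne.symm
          · exact h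
        have hsum : (l.map (fun e => if e ∈ c then (0:ℝ) else 1)).sum
            = (if e₁ ∈ c then (0:ℝ) else 1)
              + (rest.map (fun e => if e ∈ c then (0:ℝ) else 1)).sum := by
          rw [(hperm.map _).sum_eq]; simp
        have h2 : (1:ℝ) ≤ (rest.map (fun e => if e ∈ c then (0:ℝ) else 1)).sum := by
          have hmem2 : (if e₂ ∈ c then (0:ℝ) else 1)
              ∈ List.map (fun e => if e ∈ c then (0:ℝ) else 1) rest :=
            List.mem_map_of_mem he₂'
          have := List.single_le_sum
            (by intro x hx; rcases List.mem_map.1 hx with ⟨e, _, rfl⟩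
                by_cases h : e ∈ c <;> simp [h])
            _ hmem2
          simpa [hn₂] using this
        rw [hsum, if_neg hn₁]
        nlinarith [h0 c]
      · rw [if_neg htwo]
        have h1 : (1:ℝ) ≤ (l.map (fun e => if e ∈ c then (0:ℝ) else 1)).sum := by
          have hmem0 : (if e0 ∈ c then (0:ℝ) else 1)
              ∈ List.map (fun e => if e ∈ c then (0:ℝ) else 1) l :=
            List.mem_map_of_mem he0
          have := List.single_le_sum
            (by intro x hx; rcases List.mem_map.1 hx with ⟨e, _, rfl⟩
                by_cases h : e ∈ c <;> simp [h])
            _ hmem0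
          simpa [hne0] using this
        nlinarith [h0 c]
  have hsumB := Finset.sum_le_sum (fun c (_ : c ∈ (Finset.univ : Finset (Finset (V × V)))) => hMc c)
  rw [Finset.sum_add_distrib, Finset.sum_add_distrib] at hsumB
  have hA : ∑ c : Finset (V × V), θ c * 1 = 1 := by simpa using htot
  have hswap : (∑ c : Finset (V × V), θ c * (l.map (fun e => if e ∈ c then (0:ℝ) else 1)).sum)
      = (l.map (fun e => 1 - p e)).sum := by
    have : ∀ c : Finset (V × V), θ c * (l.map (fun e => if e ∈ c then (0:ℝ) else 1)).sum
        = (l.map (fun e => if e ∈ c then (0:ℝ) else θ c)).sum := by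
      intro c
      rw [← List.sum_map_mul_left]
      congr 1
      apply List.map_congr_left
      intro e _
      by_cases h : e ∈ c <;> simp [h]
    simp_rw [this]
    rw [sum_list_swap]
    congr 1
    apply List.map_congr_left
    intro e he
    exact marginal_missing hθ (edges_mem_E hγ e he)
  rw [hA, hswap] at hsumB
  have hL : L p γ = 1 - (l.map (fun e => 1 - p e)).sum := rfl
  have hprob2 : prob θ (twoMissing γ)
      = ∑ c : Finset (V × V), if twoMissing γ c then θ c else 0 := prob_eq _
  have hprobAll : prob θ (fun c => ∀ e ∈ l, e ∈ c)
      = ∑ c : Finset (V × V), if (∀ e ∈ l, e ∈ c) then θ c else 0 := prob_eq _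
  rw [hprob2]
  rw [hprobAll] at stepA
  linarith

section Construction

variable (E : Finset (V × V)) (p : V × V → ℝ) (S : Finset V)

/-- modified node potential: 1 on seeds, `piStar` elsewhere -/
noncomputable def piF (j : V) : ℝ := if j ∈ S then 1 else piStar E p S j

noncomputable def deltaF (e : V × V) : ℝ := piF E p S e.1 - (1 - p e)

/-- edge `e` is missing at level `u` -/
def missing (e : V × V) (u : ℝ) : Prop :=
  if 0 ≤ deltaF E p S e then (deltaF E p S e ≤ u ∧ u < piF E p S e.1)
  else (u < piF E p S e.1 ∨ 1 + deltaF E p S e ≤ u)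

open Classical in
noncomputable def cOf (u : ℝ) : Finset (V × V) := E.filter (fun e => ¬ missing E p S e u)

noncomputable def BP : Finset ℝ :=
  insert 0 (insert 1 (((E.image (deltaF E p S)) ∪ (E.image (fun e => 1 + deltaF E p S e))
    ∪ (Finset.univ.image (piF E p S))).image (fun x => max 0 (min 1 x))))

noncomputable def bl : List ℝ := (BP E p S).sort (· ≤ ·)

noncomputable def nb : ℕ := (bl E p S).length

noncomputable def bfun (k : ℕ) : ℝ := (bl E p S).getD k 0

open Classical in
noncomputable def theta0 (c : Finset (V × V)) : ℝ :=
  ∑ k ∈ Finset.range (nb E p S - 1), (bfun E p S (k+1) - bfun E p S k) *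
    (if cOf E p S (bfun E p S k) = c then 1 else 0)

lemma BP_bounds : ∀ x ∈ BP E p S, 0 ≤ x ∧ x ≤ 1 := by
  intro x hx
  unfold BP at hx
  rcases Finset.mem_insert.1 hx with rfl | hx
  · norm_num
  rcases Finset.mem_insert.1 hx with rfl | hx
  · norm_num
  rcases Finset.mem_image.1 hx with ⟨y, _, rfl⟩
  constructor
  · exact le_max_left _ _
  · exact max_le (by norm_num) (min_le_left _ _)

lemma zero_mem_BP : (0:ℝ) ∈ BP E p S := Finset.mem_insert_self _ _

lemma one_mem_BP : (1:ℝ) ∈ BP E p S := by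
  unfold BP
  exact Finset.mem_insert_of_mem (Finset.mem_insert_self _ _)

lemma clamp_mem_BP {x : ℝ} (h : x ∈ (E.image (deltaF E p S)) ∪ (E.image (fun e => 1 + deltaF E p S e))
    ∪ (Finset.univ.image (piF E p S))) (h0 : 0 ≤ x) (h1 : x ≤ 1) : x ∈ BP E p S := by
  unfold BP
  apply Finset.mem_insert_of_mem
  apply Finset.mem_insert_of_mem
  apply Finset.mem_image.2
  exact ⟨x, h, by rw [min_eq_right h1, max_eq_right h0]⟩

lemma sorted_bl : (bl E p S).SortedLT := Finset.sortedLT_sort _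

lemma two_le_nb : 2 ≤ nb E p S := by
  have h01 : (0:ℝ) ≠ 1 := by norm_num
  have : 2 ≤ (BP E p S).card := Finset.one_lt_card.2 ⟨0, zero_mem_BP E p S, 1, one_mem_BP E p S, h01⟩
  rwa [nb, bl, Finset.length_sort]

lemma bfun_mem {k : ℕ} (hk : k < nb E p S) : bfun E p S k ∈ BP E p S := by
  have hmem : bfun E p S k ∈ bl E p S := by
    rw [bfun, List.getD_eq_getElem _ _ hk]
    exact List.getElem_mem hk
  unfold bl at hmem
  exact (Finset.mem_sort _).1 hmem

lemma bfun_strictMono {k k' : ℕ} (h : k < k') (h' : k' < nb E p S) :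
    bfun E p S k < bfun E p S k' := by
  have hk : k < nb E p S := lt_trans h h'
  rw [bfun, List.getD_eq_getElem _ _ hk, bfun, List.getD_eq_getElem _ _ h']
  exact (sorted_bl E p S).strictMono_get (show (⟨k, hk⟩ : Fin (bl E p S).length) < ⟨k', h'⟩ from h)

lemma bfun_mono {k k' : ℕ} (h : k ≤ k') (h' : k' < nb E p S) :
    bfun E p S k ≤ bfun E p S k' := by
  rcases eq_or_lt_of_le h with rfl | h
  · exact le_rfl
  · exact le_of_lt (bfun_strictMono E p S h h')

lemma exists_idx {s : ℝ} (hs : s ∈ BP E p S) : ∃ j, j < nb E p S ∧ bfun E p S j = s := by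
  have : s ∈ bl E p S := (Finset.mem_sort _).2 hs
  rcases List.mem_iff_get.1 this with ⟨⟨j, hj⟩, hget⟩
  exact ⟨j, hj, by rw [bfun, List.getD_eq_getElem _ _ hj]; exact hget⟩

lemma bfun_zero : bfun E p S 0 = 0 := by
  have h2 := two_le_nb E p S
  obtain ⟨j, hj, hv⟩ := exists_idx E p S (zero_mem_BP E p S)
  have h1 : 0 ≤ bfun E p S 0 := (BP_bounds E p S _ (bfun_mem E p S (by omega))).1
  have h2' : bfun E p S 0 ≤ bfun E p S j := bfun_mono E p S (Nat.zero_le _) hj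
  linarith [hv ▸ h2']

lemma bfun_last : bfun E p S (nb E p S - 1) = 1 := by
  have h2 := two_le_nb E p S
  obtain ⟨j, hj, hv⟩ := exists_idx E p S (one_mem_BP E p S)
  have h1 : bfun E p S (nb E p S - 1) ≤ 1 :=
    (BP_bounds E p S _ (bfun_mem E p S (by omega))).2
  have h2' : bfun E p S j ≤ bfun E p S (nb E p S - 1) := bfun_mono E p S (by omega) (by omega)
  linarith [hv ▸ h2']

lemma len_nonneg {k : ℕ} (hk : k ∈ Finset.range (nb E p S - 1)) :
    0 ≤ bfun E p S (k+1) - bfun E p S k := by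
  rw [Finset.mem_range] at hk
  have := bfun_mono E p S (Nat.le_succ k) (by omega)
  linarith

lemma bfun_lt_one {k : ℕ} (hk : k ∈ Finset.range (nb E p S - 1)) : bfun E p S k < 1 := by
  rw [Finset.mem_range] at hk
  have h2 := two_le_nb E p S
  have := bfun_strictMono E p S (show k < nb E p S - 1 from hk) (by omega)
  rw [bfun_last] at this
  exact this

lemma total_len : ∑ k ∈ Finset.range (nb E p S - 1), (bfun E p S (k+1) - bfun E p S k) = 1 := by
  rw [Finset.sum_range_sub (fun k => bfun E p S k), bfun_zero, bfun_last]
  ring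

open Classical in
lemma stepLT {s : ℝ} (hs : s ∈ BP E p S) (h0 : 0 ≤ s) (h1 : s ≤ 1) :
    ∑ k ∈ Finset.range (nb E p S - 1), (bfun E p S (k+1) - bfun E p S k) *
      (if bfun E p S k < s then (1:ℝ) else 0) = s := by
  have h2 := two_le_nb E p S
  obtain ⟨j, hj, hv⟩ := exists_idx E p S hs
  have key : ∀ k ∈ Finset.range (nb E p S - 1),
      (bfun E p S (k+1) - bfun E p S k) * (if bfun E p S k < s then (1:ℝ) else 0)
      = min (bfun E p S (k+1)) s - min (bfun E p S k) s := by
    intro k hk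
    rw [Finset.mem_range] at hk
    by_cases h : bfun E p S k < s
    · have hkj : k < j := by
        by_contra hc
        push_neg at hc
        have := bfun_mono E p S hc (show k < nb E p S by omega)
        rw [hv] at this
        linarith
      have hk1 : bfun E p S (k+1) ≤ s := by
        rw [← hv]
        exact bfun_mono E p S (by omega) hj
      rw [if_pos h, min_eq_left hk1, min_eq_left (le_of_lt h)]
      ring
    · push_neg at h
      have : s ≤ bfun E p S (k+1) := le_trans h (by
        have := bfun_mono E p S (Nat.le_succ k) (by omega); linarith)
      rw [if_neg (not_lt.2 h), min_eq_right this, min_eq_right h]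
      ring
  rw [Finset.sum_congr rfl key, Finset.sum_range_sub (fun k => min (bfun E p S k) s),
    bfun_zero, bfun_last, min_eq_right h1, min_eq_left h0]
  ring

open Classical in
lemma theta0_swap (g : Finset (V × V) → ℝ) :
    ∑ c : Finset (V × V), theta0 E p S c * g c
    = ∑ k ∈ Finset.range (nb E p S - 1), (bfun E p S (k+1) - bfun E p S k) *
        g (cOf E p S (bfun E p S k)) := by
  unfold theta0
  have : ∀ c : Finset (V × V),
      (∑ k ∈ Finset.range (nb E p S - 1), (bfun E p S (k+1) - bfun E p S k) *
        (if cOf E p S (bfun E p S k) = c then (1:ℝ) else 0)) * g c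
      = ∑ k ∈ Finset.range (nb E p S - 1), (bfun E p S (k+1) - bfun E p S k) *
        (if cOf E p S (bfun E p S k) = c then g c else 0) := by
    intro c
    rw [Finset.sum_mul]
    apply Finset.sum_congr rfl
    intro k _
    by_cases h : cOf E p S (bfun E p S k) = c <;> simp [h]
  simp_rw [this]
  rw [Finset.sum_comm]
  apply Finset.sum_congr rfl
  intro k _
  rw [← Finset.mul_sum]
  congr 1
  simp

variable {E p S}

lemma piF_nonneg (hp : ∀ e ∈ E, 0 ≤ p e ∧ p e ≤ 1) (j : V) : 0 ≤ piF E p S j := by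
  unfold piF
  by_cases h : j ∈ S
  · simp [h]
  · simp [h, piStar_nonneg hp S j]

lemma piF_le_one (hp : ∀ e ∈ E, 0 ≤ p e ∧ p e ≤ 1) (j : V) : piF E p S j ≤ 1 := by
  unfold piF
  by_cases h : j ∈ S
  · simp [h]
  · simp [h, piStar_le_one hp S j]

lemma piF_mem_BP (hp : ∀ e ∈ E, 0 ≤ p e ∧ p e ≤ 1) (j : V) : piF E p S j ∈ BP E p S := by
  apply clamp_mem_BP
  · apply Finset.mem_union_right
    exact Finset.mem_image_of_mem _ (Finset.mem_univ j)
  · exact piF_nonneg hp j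
  · exact piF_le_one hp j

/-- key reachability property: any node influenced in scenario `cOf u` with `u < 1`
is a seed or satisfies `u < piStar`. -/
lemma reach_lt (hp : ∀ e ∈ E, 0 ≤ p e ∧ p e ≤ 1) {u : ℝ} (hu1 : u < 1) {j : V}
    (hj : influenced (cOf E p S u) S j) : j ∈ S ∨ u < piStar E p S j := by
  classical
  obtain ⟨s, hs, hr⟩ := hj
  induction hr with
  | refl => exact Or.inl hs
  | @tail b j' hab hbj ih =>
    have hb : u < piF E p S b := by
      rcases ih with h | h
      · simp [piF, h]; exact hu1
      · unfold piF
        by_cases hbS : b ∈ S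
        · simp [hbS]; exact hu1
        · simpa [hbS] using h
    have hbj' := hbj
    unfold cOf at hbj'
    rw [Finset.mem_filter] at hbj'
    obtain ⟨heE, hnm⟩ := hbj'
    unfold missing at hnm
    have hud : u < deltaF E p S (b, j') := by
      by_cases hδ : 0 ≤ deltaF E p S (b, j')
      · rw [if_pos hδ] at hnm
        push_neg at hnm
        by_contra hc
        push_neg at hc
        exact absurd (hnm hc) (not_le.2 hb)
      · rw [if_neg hδ] at hnm
        push_neg at hnm
        exact absurd hb (not_lt.2 hnm.1)
    by_cases hjS : j' ∈ S
    · exact Or.inl hjS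
    · right
      have hd : deltaF E p S (b, j') ≤ piStar E p S j' := by
        unfold deltaF piF
        by_cases hbS : b ∈ S
        · rw [if_pos hbS]
          have := piStar_step_seed hp hbS heE
          linarith
        · rw [if_neg hbS]
          have := piStar_step hp (S := S) heE
          linarith
      linarith

open Classical in
lemma missing_sum (hp : ∀ e ∈ E, 0 ≤ p e ∧ p e ≤ 1) {e : V × V} (he : e ∈ E) :
    ∑ k ∈ Finset.range (nb E p S - 1), (bfun E p S (k+1) - bfun E p S k) *
      (if missing E p S e (bfun E p S k) then (1:ℝ) else 0) = 1 - p e := by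
  have hpe := hp e he
  have ht0 : 0 ≤ piF E p S e.1 := piF_nonneg hp e.1
  have ht1 : piF E p S e.1 ≤ 1 := piF_le_one hp e.1
  have htBP : piF E p S e.1 ∈ BP E p S := piF_mem_BP hp e.1
  by_cases hδ : 0 ≤ deltaF E p S e
  · have hδt : deltaF E p S e ≤ piF E p S e.1 := by unfold deltaF; linarith [hpe.2]
    have hδBP : deltaF E p S e ∈ BP E p S := by
      apply clamp_mem_BP
      · exact Finset.mem_union_left _ (Finset.mem_union_left _ (Finset.mem_image_of_mem _ he))
      · exact hδ
      · linarith
    have hpoint : ∀ u : ℝ, (if missing E p S e u then (1:ℝ) else 0)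
        = (if u < piF E p S e.1 then (1:ℝ) else 0) - (if u < deltaF E p S e then (1:ℝ) else 0) := by
      intro u
      unfold missing
      rw [if_pos hδ]
      by_cases h1 : u < deltaF E p S e
      · rw [if_neg (by rintro ⟨h, _⟩; linarith), if_pos (by linarith), if_pos h1]
        ring
      · push_neg at h1
        by_cases h2 : u < piF E p S e.1
        · rw [if_pos ⟨h1, h2⟩, if_pos h2, if_neg (not_lt.2 h1)]
          ring
        · rw [if_neg (by rintro ⟨_, h⟩; exact h2 h), if_neg h2, if_neg (not_lt.2 h1)]
          ring
    have hsplit : ∑ k ∈ Finset.range (nb E p S - 1), (bfun E p S (k+1) - bfun E p S k) *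
        (if missing E p S e (bfun E p S k) then (1:ℝ) else 0)
        = (∑ k ∈ Finset.range (nb E p S - 1), (bfun E p S (k+1) - bfun E p S k) *
            (if bfun E p S k < piF E p S e.1 then (1:ℝ) else 0))
          - (∑ k ∈ Finset.range (nb E p S - 1), (bfun E p S (k+1) - bfun E p S k) *
            (if bfun E p S k < deltaF E p S e then (1:ℝ) else 0)) := by
      rw [← Finset.sum_sub_distrib]
      apply Finset.sum_congr rfl
      intro k _
      rw [hpoint (bfun E p S k)]
      ring
    rw [hsplit, stepLT E p S htBP ht0 ht1, stepLT E p S hδBP hδ (by linarith)]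
    unfold deltaF
    ring
  · push_neg at hδ
    have h1δ0 : 0 ≤ 1 + deltaF E p S e := by unfold deltaF; unfold deltaF at hδ; linarith [hpe.1]
    have h1δ1 : 1 + deltaF E p S e ≤ 1 := by linarith
    have ht1δ : piF E p S e.1 ≤ 1 + deltaF E p S e := by unfold deltaF; linarith [hpe.1]
    have h1δBP : 1 + deltaF E p S e ∈ BP E p S := by
      apply clamp_mem_BP
      · exact Finset.mem_union_left _ (Finset.mem_union_right _ (Finset.mem_image_of_mem _ he))
      · exact h1δ0
      · exact h1δ1
    have hpoint : ∀ u : ℝ, (if missing E p S e u then (1:ℝ) else 0)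
        = (if u < piF E p S e.1 then (1:ℝ) else 0)
          + (1 - (if u < 1 + deltaF E p S e then (1:ℝ) else 0)) := by
      intro u
      unfold missing
      rw [if_neg (not_le.2 hδ)]
      by_cases h1 : u < piF E p S e.1
      · rw [if_pos (Or.inl h1), if_pos h1, if_pos (by linarith)]
        ring
      · push_neg at h1
        by_cases h2 : u < 1 + deltaF E p S e
        · rw [if_neg (by rintro (h | h) <;> linarith), if_neg (not_lt.2 h1), if_pos h2]
          ring
        · push_neg at h2
          rw [if_pos (Or.inr h2), if_neg (not_lt.2 h1), if_neg (not_lt.2 h2)]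
          ring
    have hsplit : ∑ k ∈ Finset.range (nb E p S - 1), (bfun E p S (k+1) - bfun E p S k) *
        (if missing E p S e (bfun E p S k) then (1:ℝ) else 0)
        = (∑ k ∈ Finset.range (nb E p S - 1), (bfun E p S (k+1) - bfun E p S k) *
            (if bfun E p S k < piF E p S e.1 then (1:ℝ) else 0))
          + ((∑ k ∈ Finset.range (nb E p S - 1), (bfun E p S (k+1) - bfun E p S k))
          - (∑ k ∈ Finset.range (nb E p S - 1), (bfun E p S (k+1) - bfun E p S k) *
            (if bfun E p S k < 1 + deltaF E p S e then (1:ℝ) else 0))) := by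
      rw [← Finset.sum_sub_distrib, ← Finset.sum_add_distrib]
      apply Finset.sum_congr rfl
      intro k _
      rw [hpoint (bfun E p S k)]
      ring
    rw [hsplit, stepLT E p S htBP ht0 ht1, stepLT E p S h1δBP h1δ0 h1δ1, total_len]
    unfold deltaF
    ring

open Classical in
lemma theta0_memTheta (hp : ∀ e ∈ E, 0 ≤ p e ∧ p e ≤ 1) : memTheta E p (theta0 E p S) := by
  refine ⟨?_, ?_, ?_, ?_⟩
  · intro c
    apply Finset.sum_nonneg
    intro k hk
    have := len_nonneg E p S hk
    by_cases h : cOf E p S (bfun E p S k) = c <;> simp [h] <;> linarith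
  · intro c hc
    by_contra hsub
    apply hc
    unfold theta0
    apply Finset.sum_eq_zero
    intro k _
    by_cases h : cOf E p S (bfun E p S k) = c
    · exfalso
      apply hsub
      rw [← h]
      exact Finset.filter_subset _ _
    · simp [h]
  · have := theta0_swap E p S (fun _ => 1)
    simpa [total_len E p S] using this
  · intro e he
    have hsw : ∑ c : Finset (V × V), (if e ∈ c then theta0 E p S c else 0)
        = ∑ c : Finset (V × V), theta0 E p S c * (if e ∈ c then (1:ℝ) else 0) := by
      apply Finset.sum_congr rfl
      intro c _
      by_cases h : e ∈ c <;> simp [h]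
    rw [hsw, theta0_swap]
    have hind : ∀ k ∈ Finset.range (nb E p S - 1),
        (bfun E p S (k+1) - bfun E p S k) * (if e ∈ cOf E p S (bfun E p S k) then (1:ℝ) else 0)
        = (bfun E p S (k+1) - bfun E p S k) *
          (1 - (if missing E p S e (bfun E p S k) then (1:ℝ) else 0)) := by
      intro k _
      congr 1
      by_cases h : missing E p S e (bfun E p S k)
      · rw [if_neg (by unfold cOf; rw [Finset.mem_filter]; rintro ⟨_, hn⟩; exact hn h), if_pos h]
        ring
      · rw [if_pos (by unfold cOf; rw [Finset.mem_filter]; exact ⟨he, h⟩), if_neg h]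
        ring
    rw [Finset.sum_congr rfl hind]
    have hsplit : ∑ k ∈ Finset.range (nb E p S - 1), (bfun E p S (k+1) - bfun E p S k) *
        (1 - (if missing E p S e (bfun E p S k) then (1:ℝ) else 0))
        = (∑ k ∈ Finset.range (nb E p S - 1), (bfun E p S (k+1) - bfun E p S k))
          - (∑ k ∈ Finset.range (nb E p S - 1), (bfun E p S (k+1) - bfun E p S k) *
            (if missing E p S e (bfun E p S k) then (1:ℝ) else 0)) := by
      rw [← Finset.sum_sub_distrib]
      apply Finset.sum_congr rfl
      intro k _
      ring
    rw [hsplit, total_len, missing_sum hp he]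
    ring

lemma R_cast (c : Finset (V × V)) (S : Finset V) :
    (R c S : ℝ) = ∑ j : V, (if influenced c S j then (1:ℝ) else 0) := by
  classical
  have h1 : R c S = (Finset.univ.filter (fun j => influenced c S j)).card := by
    rw [R, Set.ncard_eq_toFinset_card']
    congr 1
    ext j
    simp
  rw [h1, Finset.card_filter]
  push_cast
  apply Finset.sum_congr rfl
  intro j _
  by_cases h : influenced c S j <;> simp [h]

lemma expInf_eq_sum_prob (θ : Finset (V × V) → ℝ) (S : Finset V) :
    expInf θ S = ∑ j : V, prob θ (fun c => influenced c S j) := by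
  classical
  unfold expInf
  simp_rw [R_cast, Finset.mul_sum]
  rw [Finset.sum_comm]
  apply Finset.sum_congr rfl
  intro j _
  rw [prob_eq (fun c => influenced c S j)]
  apply Finset.sum_congr rfl
  intro c _
  by_cases h : influenced c S j <;> simp [h]

open Classical in
lemma theta0_expInf_le (hp : ∀ e ∈ E, 0 ≤ p e ∧ p e ≤ 1) :
    expInf (theta0 E p S) S ≤ ∑ j : V, piF E p S j := by
  rw [expInf_eq_sum_prob]
  apply Finset.sum_le_sum
  intro j _
  have hpr : prob (theta0 E p S) (fun c => influenced c S j)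
      = ∑ c : Finset (V × V), theta0 E p S c * (if influenced c S j then (1:ℝ) else 0) := by
    rw [prob_eq (fun c => influenced c S j)]
    apply Finset.sum_congr rfl
    intro c _
    by_cases h : influenced c S j <;> simp [h]
  rw [hpr, theta0_swap]
  have hle : ∀ k ∈ Finset.range (nb E p S - 1),
      (bfun E p S (k+1) - bfun E p S k) *
        (if influenced (cOf E p S (bfun E p S k)) S j then (1:ℝ) else 0)
      ≤ (bfun E p S (k+1) - bfun E p S k) * (if bfun E p S k < piF E p S j then (1:ℝ) else 0) := by
    intro k hk
    apply mul_le_mul_of_nonneg_left _ (len_nonneg E p S hk)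
    by_cases h : influenced (cOf E p S (bfun E p S k)) S j
    · have hlt : bfun E p S k < piF E p S j := by
        rcases reach_lt hp (bfun_lt_one E p S hk) h with hS | hlt
        · rw [piF, if_pos hS]; exact bfun_lt_one E p S hk
        · rw [piF]
          by_cases hS : j ∈ S
          · rw [if_pos hS]; exact bfun_lt_one E p S hk
          · rwa [if_neg hS]
      rw [if_pos h, if_pos hlt]
    · rw [if_neg h]
      by_cases h2 : bfun E p S k < piF E p S j <;> simp [h2]
  calc ∑ k ∈ Finset.range (nb E p S - 1), (bfun E p S (k+1) - bfun E p S k) *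
        (if influenced (cOf E p S (bfun E p S k)) S j then (1:ℝ) else 0)
      ≤ ∑ k ∈ Finset.range (nb E p S - 1), (bfun E p S (k+1) - bfun E p S k) *
        (if bfun E p S k < piF E p S j then (1:ℝ) else 0) := Finset.sum_le_sum hle
    _ = piF E p S j := stepLT E p S (piF_mem_BP hp j) (piF_nonneg hp j) (piF_le_one hp j)

end Construction

lemma prob_ge_piStar {E : Finset (V × V)} {p : V × V → ℝ}
    (hp : ∀ e ∈ E, 0 ≤ p e ∧ p e ≤ 1) {θ : Finset (V × V) → ℝ}
    (hθ : memTheta E p θ) (S : Finset V) (j : V) :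
    piStar E p S j ≤ prob θ (fun c => influenced c S j) := by
  apply csSup_le ⟨0, Set.mem_insert _ _⟩
  rintro x (rfl | ⟨γ', hγ', rfl⟩)
  · exact prob_nonneg hθ.1 _
  · have h1 := lower_bound_path hp hθ hγ'
    have h2 := prob_nonneg hθ.1 (twoMissing γ')
    linarith

/-- let `θ*` attain the minimum of `E_θ[R(c̃, S)]` over `Θ` and let
`i ∈ V \ S` with `max_{γ ∈ Γ(S,i)} L(γ) > 0`. Then for every maximizing path `γ`,
the `θ*`-probability that at least two (distinct) edges of `γ` are missing from the
random scenario is zero. -/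
theorem at_most_one_arc_missing (E : Finset (V × V)) (p : V × V → ℝ)
    (hp : ∀ e ∈ E, 0 ≤ p e ∧ p e ≤ 1) (S : Finset V)
    (θs : Finset (V × V) → ℝ) (hθs : memTheta E p θs)
    (hmin : ∀ θ : Finset (V × V) → ℝ, memTheta E p θ → expInf θs S ≤ expInf θ S)
    (i : V) (hi : i ∉ S)
    (hpos : 0 < sSup {x : ℝ | ∃ γ : List V, IsPathFrom E S i γ ∧ x = L p γ})
    (γ : List V) (hγ : IsPathFrom E S i γ)
    (hmax : L p γ = sSup {x : ℝ | ∃ γ' : List V, IsPathFrom E S i γ' ∧ x = L p γ'}) :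
    prob θs (fun c => ∃ e₁ ∈ pathEdges γ, ∃ e₂ ∈ pathEdges γ,
      e₁ ≠ e₂ ∧ e₁ ∉ c ∧ e₂ ∉ c) = 0 := by
    -- proof of at_most_one_arc_missing
  classical
  show prob θs (twoMissing γ) = 0
  set q := prob θs (twoMissing γ) with hq
  have h0q : 0 ≤ q := prob_nonneg hθs.1 _
  -- upper bound via the constructed distribution
  have hub : expInf θs S ≤ ∑ j : V, piF E p S j :=
    le_trans (hmin _ (theta0_memTheta hp)) (theta0_expInf_le hp)
  -- identify L p γ with piF i
  have hLpi : piF E p S i = L p γ := by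
    rw [piF, if_neg hi, piStar,
      csSup_insert (bddAbove_paths hp S i) ⟨L p γ, γ, hγ, rfl⟩]
    rw [← hmax] at hpos ⊢
    exact sup_eq_right.2 (le_of_lt hpos)
  -- lower bounds
  have hi_term : piF E p S i + q ≤ prob θs (fun c => influenced c S i) := by
    have := lower_bound_path hp hθs hγ
    rw [hLpi]
    linarith
  have hterm : ∀ j ∈ Finset.univ.erase i, piF E p S j ≤ prob θs (fun c => influenced c S j) := by
    intro j _
    by_cases hjS : j ∈ S
    · rw [piF, if_pos hjS, prob_seed hθs hjS]
    · rw [piF, if_neg hjS]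
      exact prob_ge_piStar hp hθs S j
  have hsum := expInf_eq_sum_prob θs S
  have e1 : ∑ j : V, piF E p S j
      = piF E p S i + ∑ j ∈ Finset.univ.erase i, piF E p S j :=
    (Finset.add_sum_erase _ _ (Finset.mem_univ i)).symm
  have e2 : ∑ j : V, prob θs (fun c => influenced c S j)
      = prob θs (fun c => influenced c S i)
        + ∑ j ∈ Finset.univ.erase i, prob θs (fun c => influenced c S j) :=
    (Finset.add_sum_erase _ _ (Finset.mem_univ i)).symm
  have h3 := Finset.sum_le_sum hterm
  linarith

end CorrIM
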